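/- arXiv:1806.00002 — 7 statements merged into one kernel-verified Lean document; each statement's English description precedes it below -/
import Mathlib

section
/- Let d ≥ 1, let n : Fin d → ℕ, and let A : (∀ k : Fin d, Fin (n k)) → ℝ be a tensor of size n 0 × n 1 × ⋯ × n (d-1). Suppose there exist finite sets S k ⊆ Fin (n k) (one for each k : Fin d) such that A x = 0 whenever x k ∈ S k for every k, and such that ∑_{k : Fin d} |S k| = 1 + ∑_{k ≠ 0} n k. Then per(A) = 0. -/
/-- The permanent (1-permanent) of a tensor of size `n 0 × n 1 × ⋯ × n (d-1)`:
the sum over all families of injections `σ k : Fin (n 0) → Fin (n k)` with `σ 0 = id`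
of the products of the corresponding entries. -/
noncomputable def tensorPer {d : ℕ} (hd : 1 ≤ d) (n : Fin d → ℕ)
    (A : (∀ k : Fin d, Fin (n k)) → ℝ) : ℝ :=
  ∑ σ ∈ Finset.univ.filter
      (fun σ : ∀ k : Fin d, Fin (n ⟨0, hd⟩) → Fin (n k) =>
        (∀ k, Function.Injective (σ k)) ∧ σ ⟨0, hd⟩ = id),
    ∏ i : Fin (n ⟨0, hd⟩), A (fun k => σ k i)

/-- Frobenius–König type condition (Dow–Gibson): if a tensor `A` contains a zero
sub-tensor of sizes `m k = |S k|` with `∑ k m k = 1 + ∑_{k ≠ 0} n k`, then `per A = 0`. -/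
theorem per_eq_zero_of_zero_subtensor {d : ℕ} (hd : 1 ≤ d) (n : Fin d → ℕ)
    (A : (∀ k : Fin d, Fin (n k)) → ℝ)
    (S : ∀ k : Fin d, Finset (Fin (n k)))
    (hzero : ∀ x : ∀ k : Fin d, Fin (n k), (∀ k, x k ∈ S k) → A x = 0)
    (hcard : ∑ k : Fin d, (S k).card
      = 1 + ∑ k ∈ Finset.univ.filter (fun k : Fin d => k ≠ ⟨0, hd⟩), n k) :
    tensorPer hd n A = 0 := by
  classical
  set z : Fin d := ⟨0, hd⟩ with hz
  rw [tensorPer]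
  apply Finset.sum_eq_zero
  intro σ hσ
  rw [Finset.mem_filter] at hσ
  obtain ⟨-, hinj, h0⟩ := hσ
  by_cases hex : ∃ i ∈ S z, ∀ k, σ k i ∈ S k
  · obtain ⟨i, hi, hik⟩ := hex
    exact Finset.prod_eq_zero (Finset.mem_univ i) (hzero _ hik)
  · exfalso
    push_neg at hex
    have hsub : S z ⊆ (Finset.univ.erase z).biUnion
        (fun k => (S z).filter (fun i => σ k i ∉ S k)) := by
      intro i hi
      obtain ⟨k, hk⟩ := hex i hi
      have hkz : k ≠ z := by
        intro h; subst h; rw [h0] at hk; exact hk hi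
      exact Finset.mem_biUnion.2 ⟨k, Finset.mem_erase.2 ⟨hkz, Finset.mem_univ k⟩,
        Finset.mem_filter.2 ⟨hi, hk⟩⟩
    have h1 : (S z).card ≤ ∑ k ∈ Finset.univ.erase z, (n k - (S k).card) := by
      refine le_trans (Finset.card_le_card hsub) (le_trans Finset.card_biUnion_le ?_)
      refine Finset.sum_le_sum (fun k _ => ?_)
      have hle : ((S z).filter (fun i => σ k i ∉ S k)).card ≤ ((S k)ᶜ).card := by
        apply Finset.card_le_card_of_injOn (σ k)
        · intro i hi
          rw [Finset.mem_coe, Finset.mem_compl]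
          exact (Finset.mem_filter.1 (Finset.mem_coe.1 hi)).2
        · exact fun a _ b _ h => hinj k h
      simpa [Finset.card_compl] using hle
    have h2 : ∀ k, (S k).card ≤ n k := fun k => by
      simpa using Finset.card_le_univ (S k)
    have h3 : ∑ k ∈ Finset.univ.erase z, (n k - (S k).card)
        + ∑ k ∈ Finset.univ.erase z, (S k).card
        = ∑ k ∈ Finset.univ.erase z, n k := by
      rw [← Finset.sum_add_distrib]
      exact Finset.sum_congr rfl fun k _ => Nat.sub_add_cancel (h2 k)
    rw [Finset.filter_ne'] at hcard
    have h4 : (S z).card + ∑ k ∈ Finset.univ.erase z, (S k).card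
        = 1 + ∑ k ∈ Finset.univ.erase z, n k :=
      (Finset.add_sum_erase Finset.univ (fun k => (S k).card)
        (Finset.mem_univ z)).trans hcard
    omega
end

section
/- For every n×n×n tensor A : Fin n → Fin n → Fin n → ℝ there exists an n²×n²×n² tensor B : Fin (n^2) → Fin (n^2) → Fin (n^2) → ℝ such that every entry of B is either 0 or equal to some entry of A (for all x y z, B x y z = 0 or there exist i j k with B x y z = A i j k), and per(B) = Per(A), where per(B) = ∑ over pairs of permutations α, β ∈ Equiv.Perm (Fin (n^2)) of ∏_{x : Fin (n^2)} B x (α x) (β x). -/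
/-- A family `π : Fin n → Equiv.Perm (Fin n)` is discordant if
`π k i ≠ π l i` for all `k ≠ l` and all `i`. -/
def Discordant {n : ℕ} (π : Fin n → Equiv.Perm (Fin n)) : Prop :=
  ∀ k l, k ≠ l → ∀ i, π k i ≠ π l i

instance {n : ℕ} : DecidablePred (Discordant (n := n)) := fun _ =>
  inferInstanceAs (Decidable (∀ _ _, _ → ∀ _, _))

/-- The 2-permanent of an `n × n × n` tensor. -/
noncomputable def Per2 {n : ℕ} (A : Fin n → Fin n → Fin n → ℝ) : ℝ :=
  ∑ π ∈ Finset.univ.filter (fun π : Fin n → Equiv.Perm (Fin n) => Discordant π),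
    ∏ k : Fin n, ∏ i : Fin n, A i (π k i) k

/-- The 1-permanent of an `m × m × m` tensor. -/
noncomputable def per3 {m : ℕ} (B : Fin m → Fin m → Fin m → ℝ) : ℝ :=
  ∑ α : Equiv.Perm (Fin m), ∑ β : Equiv.Perm (Fin m), ∏ x : Fin m, B x (α x) (β x)

section Aux

variable {n : ℕ}

/-- The permutation `(i,k) ↦ (π k i, k)` of `Fin n × Fin n`. -/
def aPerm (π : Fin n → Equiv.Perm (Fin n)) : Equiv.Perm (Fin n × Fin n) where
  toFun p := (π p.2 p.1, p.2)
  invFun p := ((π p.2).symm p.1, p.2)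
  left_inv p := by simp
  right_inv p := by simp

@[simp] lemma aPerm_apply (π : Fin n → Equiv.Perm (Fin n)) (p : Fin n × Fin n) :
    aPerm π p = (π p.2 p.1, p.2) := rfl

/-- For discordant `π`, the permutation `(i,k) ↦ (i, π k i)` of `Fin n × Fin n`. -/
noncomputable def bPerm (π : Fin n → Equiv.Perm (Fin n)) (h : Discordant π) :
    Equiv.Perm (Fin n × Fin n) :=
  Equiv.ofBijective (fun p => (p.1, π p.2 p.1)) (by
    rw [← Finite.injective_iff_bijective]
    rintro ⟨i, k⟩ ⟨i', k'⟩ hpq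
    simp only [Prod.mk.injEq] at hpq
    obtain ⟨h1, h2⟩ := hpq
    subst h1
    by_contra hne
    have hkk : k ≠ k' := fun hh => hne (by simp [hh])
    exact h k k' hkk i h2)

@[simp] lemma bPerm_apply (π : Fin n → Equiv.Perm (Fin n)) (h : Discordant π)
    (p : Fin n × Fin n) : bPerm π h p = (p.1, π p.2 p.1) := rfl

/-- The good pairs of permutations of `Fin n × Fin n`. -/
def GoodPair (ab : Equiv.Perm (Fin n × Fin n) × Equiv.Perm (Fin n × Fin n)) : Prop :=
  ∀ p : Fin n × Fin n,
    (ab.1 p).2 = p.2 ∧ (ab.2 p).1 = p.1 ∧ (ab.2 p).2 = (ab.1 p).1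

instance : DecidablePred (GoodPair (n := n)) := fun _ =>
  inferInstanceAs (Decidable (∀ _, _))

lemma main_sum (A : Fin n → Fin n → Fin n → ℝ) :
    (∑ α : Equiv.Perm (Fin n × Fin n), ∑ β : Equiv.Perm (Fin n × Fin n),
      ∏ p : Fin n × Fin n,
        (if (α p).2 = p.2 ∧ (β p).1 = p.1 ∧ (β p).2 = (α p).1
          then A p.1 (α p).1 p.2 else 0)) = Per2 A := by
  classical
  have h1 : (∑ α : Equiv.Perm (Fin n × Fin n), ∑ β : Equiv.Perm (Fin n × Fin n),
      ∏ p : Fin n × Fin n,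
        (if (α p).2 = p.2 ∧ (β p).1 = p.1 ∧ (β p).2 = (α p).1
          then A p.1 (α p).1 p.2 else 0)) =
      ∑ ab ∈ (Finset.univ ×ˢ Finset.univ :
          Finset (Equiv.Perm (Fin n × Fin n) × Equiv.Perm (Fin n × Fin n))),
        ∏ p : Fin n × Fin n,
          (if (ab.1 p).2 = p.2 ∧ (ab.2 p).1 = p.1 ∧ (ab.2 p).2 = (ab.1 p).1
            then A p.1 (ab.1 p).1 p.2 else 0) := by
    rw [Finset.sum_product]
  rw [h1]
  have h2 : ∀ ab ∈ (Finset.univ ×ˢ Finset.univ :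
        Finset (Equiv.Perm (Fin n × Fin n) × Equiv.Perm (Fin n × Fin n))),
      ab ∉ Finset.filter GoodPair (Finset.univ ×ˢ Finset.univ) →
      (∏ p : Fin n × Fin n,
        (if (ab.1 p).2 = p.2 ∧ (ab.2 p).1 = p.1 ∧ (ab.2 p).2 = (ab.1 p).1
          then A p.1 (ab.1 p).1 p.2 else 0)) = 0 := by
    intro ab hab hnot
    simp only [Finset.mem_filter, hab, true_and] at hnot
    rw [GoodPair] at hnot
    push_neg at hnot
    obtain ⟨p, hp⟩ := hnot
    exact Finset.prod_eq_zero (Finset.mem_univ p)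
      (if_neg (fun hcon => hp hcon.1 hcon.2.1 hcon.2.2))
  rw [← Finset.sum_subset (Finset.filter_subset _ _) h2]
  rw [Per2]
  symm
  refine Finset.sum_bij
    (fun π hπ => (aPerm π, bPerm π (by simpa using hπ))) ?_ ?_ ?_ ?_
  · intro π hπ
    simp only [Finset.mem_filter, Finset.mem_product, Finset.mem_univ, true_and,
      and_true]
    intro p
    simp
  · intro π hπ π' hπ' heq
    simp only [Prod.mk.injEq] at heq
    funext k
    refine Equiv.ext fun i => ?_
    have h3 : aPerm π (i, k) = aPerm π' (i, k) := by rw [heq.1]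
    simpa using h3
  · intro ab hab
    simp only [Finset.mem_filter] at hab
    obtain ⟨-, hg⟩ := hab
    have hinj : ∀ k : Fin n, Function.Injective (fun i => (ab.1 (i, k)).1) := by
      intro k i i' hii
      have h4 : ab.1 (i, k) = ab.1 (i', k) := by
        have e1 := (hg (i, k)).1
        have e2 := (hg (i', k)).1
        exact Prod.ext hii (by simp only at e1 e2; rw [e1, e2])
      have := ab.1.injective h4
      exact (Prod.mk.injEq _ _ _ _).mp this |>.1
    set π : Fin n → Equiv.Perm (Fin n) := fun k =>
      Equiv.ofBijective (fun i => (ab.1 (i, k)).1)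
        ((Finite.injective_iff_bijective).mp (hinj k)) with hπdef
    have hπapply : ∀ k i, π k i = (ab.1 (i, k)).1 := fun k i => rfl
    have hdisc : Discordant π := by
      intro k l hkl i hcon
      rw [hπapply, hπapply] at hcon
      have hb1 := hg (i, k)
      have hb2 := hg (i, l)
      have : ab.2 (i, k) = ab.2 (i, l) := by
        refine Prod.ext ?_ ?_
        · rw [hb1.2.1, hb2.2.1]
        · rw [hb1.2.2, hb2.2.2, hcon]
      have := ab.2.injective this
      exact hkl ((Prod.mk.injEq _ _ _ _).mp this).2
    refine ⟨π, by simpa using hdisc, ?_⟩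
    have hA : aPerm π = ab.1 := by
      ext p
      · rcases p with ⟨i, k⟩
        simp [hπapply]
      · rcases p with ⟨i, k⟩
        simp [(hg (i, k)).1]
    have hB : bPerm π hdisc = ab.2 := by
      ext p
      · rcases p with ⟨i, k⟩
        simp [(hg (i, k)).2.1]
      · rcases p with ⟨i, k⟩
        simp [hπapply, (hg (i, k)).2.2, (hg (i, k)).2.1]
    exact Prod.ext hA (by rw [← hB])
  · intro π hπ
    have hval : ∀ p : Fin n × Fin n,
        (if ((aPerm π) p).2 = p.2 ∧ ((bPerm π (by simpa using hπ)) p).1 = p.1 ∧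
            ((bPerm π (by simpa using hπ)) p).2 = ((aPerm π) p).1
          then A p.1 ((aPerm π) p).1 p.2 else 0) = A p.1 (π p.2 p.1) p.2 := by
      intro p
      rw [if_pos (by simp)]
      simp
    calc (∏ k : Fin n, ∏ i : Fin n, A i (π k i) k)
        = ∏ i : Fin n, ∏ k : Fin n, A i (π k i) k := Finset.prod_comm
      _ = ∏ p : Fin n × Fin n, A p.1 (π p.2 p.1) p.2 := by
          rw [Fintype.prod_prod_type]
      _ = _ := by
          exact (Finset.prod_congr rfl (fun p _ => hval p)).symm

end Aux

/-- Dow–Gibson: every 2-permanent of an `n × n × n` tensor can be realized as the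
1-permanent of an `n² × n² × n²` tensor whose nonzero entries are entries of `A`. -/
theorem Per2_eq_per_of_larger_tensor {n : ℕ} (A : Fin n → Fin n → Fin n → ℝ) :
    ∃ B : Fin (n ^ 2) → Fin (n ^ 2) → Fin (n ^ 2) → ℝ,
      (∀ x y z, B x y z = 0 ∨ ∃ i j k, B x y z = A i j k) ∧
      per3 B = Per2 A := by
  classical
  let e : Fin (n ^ 2) ≃ Fin n × Fin n := (finCongr (pow_two n)).trans finProdFinEquiv.symm
  let F : Fin n × Fin n → Fin n × Fin n → Fin n × Fin n → ℝ := fun p q r =>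
    if q.2 = p.2 ∧ r.1 = p.1 ∧ r.2 = q.1 then A p.1 q.1 p.2 else 0
  refine ⟨fun x y z => F (e x) (e y) (e z), ?_, ?_⟩
  · intro x y z
    by_cases hc : ((e y).2 = (e x).2 ∧ (e z).1 = (e x).1 ∧ (e z).2 = (e y).1)
    · exact Or.inr ⟨(e x).1, (e y).1, (e x).2, by simp [F, hc]⟩
    · exact Or.inl (by simp [F, hc])
  · have step1 : per3 (fun x y z => F (e x) (e y) (e z)) =
        ∑ α : Equiv.Perm (Fin n × Fin n), ∑ β : Equiv.Perm (Fin n × Fin n),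
          ∏ p : Fin n × Fin n, F p (α p) (β p) := by
      rw [per3]
      refine Fintype.sum_equiv (Equiv.permCongr e) _ _ (fun α => ?_)
      refine Fintype.sum_equiv (Equiv.permCongr e) _ _ (fun β => ?_)
      refine Fintype.prod_equiv e _ _ (fun x => ?_)
      simp [Equiv.permCongr_apply]
    rw [step1]
    have := main_sum A
    simpa [F] using this
end

section
/- The number of subsets S of Fin n × Fin n × Fin n such that for every i there is exactly one pair (j,k) with (i,j,k) ∈ S, for every j there is exactly one pair (i,k) with (i,j,k) ∈ S, and for every k there is exactly one pair (i,j) with (i,j,k) ∈ S, equals (n!)². Equivalently, there are exactly (n!)² permutation tensors of order 3 and dimension n. -/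
open Finset

/-- There are exactly `(n!)²` permutation tensors of order 3 and dimension `n`:
the number of subsets `S` of `Fin n × Fin n × Fin n` meeting every hyperplane in
exactly one point is `(n!)²`. -/
theorem card_permutation_tensors (n : ℕ) :
    ((Finset.univ : Finset (Finset (Fin n × Fin n × Fin n))).filter
      (fun S =>
        (∀ i : Fin n,
          (Finset.univ.filter (fun jk : Fin n × Fin n => (i, jk.1, jk.2) ∈ S)).card = 1) ∧
        (∀ j : Fin n,
          (Finset.univ.filter (fun ik : Fin n × Fin n => (ik.1, j, ik.2) ∈ S)).card = 1) ∧
        (∀ k : Fin n,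
          (Finset.univ.filter (fun ij : Fin n × Fin n => (ij.1, ij.2, k) ∈ S)).card = 1))).card
    = n.factorial ^ 2 := by
  have key : ((Finset.univ : Finset (Equiv.Perm (Fin n) × Equiv.Perm (Fin n)))).card
      = ((Finset.univ : Finset (Finset (Fin n × Fin n × Fin n))).filter
      (fun S =>
        (∀ i : Fin n,
          (Finset.univ.filter (fun jk : Fin n × Fin n => (i, jk.1, jk.2) ∈ S)).card = 1) ∧
        (∀ j : Fin n,
          (Finset.univ.filter (fun ik : Fin n × Fin n => (ik.1, j, ik.2) ∈ S)).card = 1) ∧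
        (∀ k : Fin n,
          (Finset.univ.filter (fun ij : Fin n × Fin n => (ij.1, ij.2, k) ∈ S)).card = 1))).card := by
    apply Finset.card_nbij (fun p => Finset.univ.image (fun i => (i, p.1 i, p.2 i)))
    · rintro ⟨σ, τ⟩ -
      have hmem : ∀ i j k, (i, j, k) ∈ Finset.univ.image (fun i => (i, σ i, τ i)) ↔
          j = σ i ∧ k = τ i := by
        intro i j k
        simp only [mem_image, mem_univ, true_and, Prod.mk.injEq]
        constructor
        · rintro ⟨i', rfl, rfl, rfl⟩; exact ⟨rfl, rfl⟩
        · rintro ⟨rfl, rfl⟩; exact ⟨i, rfl, rfl, rfl⟩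
      simp only [mem_coe, coe_filter, Set.mem_setOf_eq, mem_filter, mem_univ, true_and]
      refine ⟨fun i => ?_, fun j => ?_, fun k => ?_⟩
      · have : (Finset.univ.filter fun jk : Fin n × Fin n =>
            (i, jk.1, jk.2) ∈ Finset.univ.image (fun i => (i, σ i, τ i))) = {(σ i, τ i)} := by
          ext jk; simp [hmem, Prod.ext_iff]
        rw [this]; simp
      · have : (Finset.univ.filter fun ik : Fin n × Fin n =>
            (ik.1, j, ik.2) ∈ Finset.univ.image (fun i => (i, σ i, τ i))) = {(σ.symm j, τ (σ.symm j))} := by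
          ext ik
          simp only [mem_filter, mem_univ, true_and, hmem, mem_singleton, Prod.ext_iff]
          constructor
          · rintro ⟨h1, h2⟩
            have : σ.symm j = ik.1 := by rw [h1]; simp
            exact ⟨this.symm, by rw [h2, this]⟩
          · rintro ⟨h1, h2⟩
            exact ⟨by rw [h1]; simp, by rw [h2, h1]⟩
        rw [this]; simp
      · have : (Finset.univ.filter fun ij : Fin n × Fin n =>
            (ij.1, ij.2, k) ∈ Finset.univ.image (fun i => (i, σ i, τ i))) = {(τ.symm k, σ (τ.symm k))} := by
          ext ij
          simp only [mem_filter, mem_univ, true_and, hmem, mem_singleton, Prod.ext_iff]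
          constructor
          · rintro ⟨h1, h2⟩
            have : τ.symm k = ij.1 := by rw [h2]; simp
            exact ⟨this.symm, by rw [h1, this]⟩
          · rintro ⟨h1, h2⟩
            exact ⟨by rw [h2, h1], by rw [h1]; simp⟩
        rw [this]; simp
    · rintro ⟨σ, τ⟩ - ⟨σ', τ'⟩ - h
      simp only at h
      have : ∀ i, (i, σ i, τ i) ∈ Finset.univ.image (fun i => (i, σ' i, τ' i)) := by
        intro i; rw [← h]; exact mem_image_of_mem _ (mem_univ i)
      have h2 : ∀ i, σ i = σ' i ∧ τ i = τ' i := by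
        intro i
        obtain ⟨i', -, hi'⟩ := mem_image.mp (this i)
        have h0 : i' = i := congrArg Prod.fst hi'
        subst h0
        exact ⟨(congrArg (fun p => p.2.1) hi').symm, (congrArg (fun p => p.2.2) hi').symm⟩
      exact Prod.ext (Equiv.ext fun i => (h2 i).1) (Equiv.ext fun i => (h2 i).2)
    · intro S hS
      simp only [coe_filter, Set.mem_setOf_eq, mem_univ, true_and] at hS
      obtain ⟨h1, h2, h3⟩ := hS
      -- extract function f
      have hf : ∀ i : Fin n, ∃ jk : Fin n × Fin n, ∀ jk' : Fin n × Fin n,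
          ((i, jk'.1, jk'.2) ∈ S ↔ jk' = jk) := by
        intro i
        obtain ⟨a, ha⟩ := card_eq_one.mp (h1 i)
        refine ⟨a, fun jk' => ?_⟩
        constructor
        · intro h
          have hm : jk' ∈ Finset.univ.filter (fun jk : Fin n × Fin n => (i, jk.1, jk.2) ∈ S) :=
            mem_filter.mpr ⟨mem_univ _, h⟩
          rw [ha] at hm
          simpa using hm
        · rintro rfl
          have hm : jk' ∈ Finset.univ.filter (fun jk : Fin n × Fin n => (i, jk.1, jk.2) ∈ S) := by
            rw [ha]; exact mem_singleton_self _
          exact (mem_filter.mp hm).2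
      choose f hfS using hf
      have hmemS : ∀ i j k, (i, j, k) ∈ S ↔ (j, k) = f i := fun i j k => hfS i (j, k)
      -- f fst injective
      have hinj1 : Function.Injective (fun i => (f i).1) := by
        intro a b hab
        simp only at hab
        have ha' : (a, (f a).2) ∈ Finset.univ.filter (fun ik : Fin n × Fin n => (ik.1, (f a).1, ik.2) ∈ S) := by
          simp only [mem_filter, mem_univ, true_and]
          exact (hmemS a (f a).1 (f a).2).mpr rfl
        have hb' : (b, (f b).2) ∈ Finset.univ.filter (fun ik : Fin n × Fin n => (ik.1, (f a).1, ik.2) ∈ S) := by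
          simp only [mem_filter, mem_univ, true_and]
          rw [hab]
          exact (hmemS b (f b).1 (f b).2).mpr rfl
        have := Finset.card_le_one.mp (le_of_eq (h2 (f a).1)) _ ha' _ hb'
        exact congrArg Prod.fst this
      have hinj2 : Function.Injective (fun i => (f i).2) := by
        intro a b hab
        simp only at hab
        have ha' : (a, (f a).1) ∈ Finset.univ.filter (fun ij : Fin n × Fin n => (ij.1, ij.2, (f a).2) ∈ S) := by
          simp only [mem_filter, mem_univ, true_and]
          exact (hmemS a (f a).1 (f a).2).mpr rfl
        have hb' : (b, (f b).1) ∈ Finset.univ.filter (fun ij : Fin n × Fin n => (ij.1, ij.2, (f a).2) ∈ S) := by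
          simp only [mem_filter, mem_univ, true_and]
          rw [hab]
          exact (hmemS b (f b).1 (f b).2).mpr rfl
        have := Finset.card_le_one.mp (le_of_eq (h3 (f a).2)) _ ha' _ hb'
        exact congrArg Prod.fst this
      let σ := Equiv.ofBijective _ ((Finite.injective_iff_bijective).mp hinj1)
      let τ := Equiv.ofBijective _ ((Finite.injective_iff_bijective).mp hinj2)
      refine ⟨(σ, τ), by simp, ?_⟩
      simp only
      ext ⟨i, j, k⟩
      simp only [mem_image, mem_univ, true_and]
      rw [hmemS]
      constructor
      · rintro ⟨i', hi'⟩
        obtain ⟨rfl, h4, h5⟩ := (by simpa [Prod.ext_iff] using hi' : i' = i ∧ σ i' = j ∧ τ i' = k)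
        rw [← h4, ← h5]
        rfl
      · intro h
        exact ⟨i, by simp [Prod.ext_iff, σ, τ, Equiv.ofBijective]; exact ⟨(congrArg Prod.fst h).symm, (congrArg Prod.snd h).symm⟩⟩
  rw [← key]
  simp [sq, Fintype.card_perm]
end

section
/- Let P and Q be n×n×n line-stochastic tensors with Per(P) = 0 and Per(Q) = 0. Then either Per(t • P + (1 - t) • Q) = 0 for every real t with 0 < t < 1, or Per(t • P + (1 - t) • Q) ≠ 0 for every real t with 0 < t < 1. -/
/-- An `n × n × n` tensor is line-stochastic if all its entries are nonnegative
and all its line sums equal 1. -/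
def LineStochastic {n : ℕ} (A : Fin n → Fin n → Fin n → ℝ) : Prop :=
  (∀ i j k, 0 ≤ A i j k) ∧
  (∀ j k, ∑ i, A i j k = 1) ∧
  (∀ i k, ∑ j, A i j k = 1) ∧
  (∀ i j, ∑ k, A i j k = 1)

/-- For line-stochastic tensors `P, Q` with vanishing 2-permanent, either every
proper convex combination of `P` and `Q` has vanishing 2-permanent, or none does. -/
theorem Per2_segment_dichotomy {n : ℕ} (P Q : Fin n → Fin n → Fin n → ℝ)
    (hP : LineStochastic P) (hQ : LineStochastic Q)
    (hP0 : Per2 P = 0) (hQ0 : Per2 Q = 0) :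
    (∀ t : ℝ, 0 < t → t < 1 → Per2 (t • P + (1 - t) • Q) = 0) ∨
    (∀ t : ℝ, 0 < t → t < 1 → Per2 (t • P + (1 - t) • Q) ≠ 0) := by
  obtain ⟨hPnn, -, -, -⟩ := hP
  obtain ⟨hQnn, -, -, -⟩ := hQ
  have hentry : ∀ (t : ℝ) (i j k), (t • P + (1 - t) • Q) i j k
      = t * P i j k + (1 - t) * Q i j k := by
    intro t i j k; simp [mul_comm]
  by_cases hC : ∀ π : Fin n → Equiv.Perm (Fin n), Discordant π →
      ∃ k i, P i (π k i) k = 0 ∧ Q i (π k i) k = 0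
  · left
    intro t _ _
    unfold Per2
    apply Finset.sum_eq_zero
    intro π hπ
    rw [Finset.mem_filter] at hπ
    obtain ⟨k, i, hPz, hQz⟩ := hC π hπ.2
    apply Finset.prod_eq_zero (Finset.mem_univ k)
    apply Finset.prod_eq_zero (Finset.mem_univ i)
    rw [hentry, hPz, hQz]; ring
  · right
    push_neg at hC
    obtain ⟨π, hπd, hπ⟩ := hC
    intro t ht0 ht1
    have ht1' : 0 < 1 - t := by linarith
    have hpos : ∀ (i j k), 0 < P i j k ∨ 0 < Q i j k →
        0 < (t • P + (1 - t) • Q) i j k := by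
      intro i j k h
      rw [hentry]
      rcases h with h | h
      · have := hQnn i j k; nlinarith
      · have := hPnn i j k; nlinarith
    have hnn : ∀ (i j k), 0 ≤ (t • P + (1 - t) • Q) i j k := by
      intro i j k
      rw [hentry]
      have := hPnn i j k; have := hQnn i j k; nlinarith
    have hterm : 0 < ∏ k : Fin n, ∏ i : Fin n, (t • P + (1 - t) • Q) i (π k i) k := by
      apply Finset.prod_pos; intro k _
      apply Finset.prod_pos; intro i _
      apply hpos
      by_cases hp : P i (π k i) k = 0
      · exact Or.inr (lt_of_le_of_ne (hQnn _ _ _) (Ne.symm (hπ k i hp)))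
      · exact Or.inl (lt_of_le_of_ne (hPnn _ _ _) (Ne.symm hp))
    have : 0 < Per2 (t • P + (1 - t) • Q) := by
      unfold Per2
      apply Finset.sum_pos' ?_ ⟨π, Finset.mem_filter.mpr ⟨Finset.mem_univ _, hπd⟩, hterm⟩
      intro σ _
      exact Finset.prod_nonneg fun k _ => Finset.prod_nonneg fun i _ => hnn _ _ _
    exact ne_of_gt this
end

section
/- Let A : Fin 2 → Fin 2 → Fin 2 → ℝ be a line-stochastic 2×2×2 tensor. Then there exists t with 0 ≤ t ≤ 1 such that for all i, j, k, A i j k = t * E₀ i j k + (1 - t) * E₁ i j k, where E₀ i j k = 1 if i.val + j.val + k.val is even and 0 otherwise, and E₁ i j k = 1 if i.val + j.val + k.val is odd and 0 otherwise. (E₀ and E₁ are the two 2×2×2 line-permutation tensors, so every 2×2×2 line-stochastic tensor is a convex combination of line-permutation tensors.) -/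
/-- The `2 × 2 × 2` line-permutation tensor with 1s at the positions of even
coordinate sum. -/
def E₀ : Fin 2 → Fin 2 → Fin 2 → ℝ := fun i j k =>
  if Even (i.val + j.val + k.val) then 1 else 0

/-- The `2 × 2 × 2` line-permutation tensor with 1s at the positions of odd
coordinate sum. -/
def E₁ : Fin 2 → Fin 2 → Fin 2 → ℝ := fun i j k =>
  if Even (i.val + j.val + k.val) then 0 else 1

/-- Every `2 × 2 × 2` line-stochastic tensor is a convex combination of the two
`2 × 2 × 2` line-permutation tensors `E₀` and `E₁`. -/
theorem lineStochastic_two_convex (A : Fin 2 → Fin 2 → Fin 2 → ℝ)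
    (hA : LineStochastic A) :
    ∃ t : ℝ, 0 ≤ t ∧ t ≤ 1 ∧
      ∀ i j k, A i j k = t * E₀ i j k + (1 - t) * E₁ i j k := by
  obtain ⟨hpos, h1, h2, h3⟩ := hA
  refine ⟨A 0 0 0, hpos 0 0 0, ?_, ?_⟩
  · have := h1 0 0; simp [Fin.sum_univ_two] at this
    have := hpos 1 0 0; linarith
  · intro i j k
    have e100 := h1 0 0; have e101 := h1 0 1; have e110 := h1 1 0; have e111 := h1 1 1
    have e200 := h2 0 0; have e201 := h2 0 1; have e210 := h2 1 0; have e211 := h2 1 1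
    have e300 := h3 0 0; have e301 := h3 0 1; have e310 := h3 1 0; have e311 := h3 1 1
    simp [Fin.sum_univ_two] at *
    fin_cases i <;> fin_cases j <;> fin_cases k <;>
      simp [E₀, E₁, Nat.even_add_one] <;> linarith
end

section
/- Let C : Fin 2 → Fin 2 → Fin 2 → ℝ be defined by C i j k = 1/2 if i.val + j.val + k.val is odd and C i j k = 0 otherwise (so, in 1-based indexing, the entries at positions (2,1,1), (1,2,1), (1,1,2), (2,2,2) equal 1/2 and all other entries are 0). Then C is plane-stochastic, but C does not belong to the convex hull, in the real vector space of functions Fin 2 → Fin 2 → Fin 2 → ℝ, of the set of 2×2×2 plane-permutation tensors. -/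
def PlaneStochastic (A : Fin 2 → Fin 2 → Fin 2 → ℝ) : Prop :=
  (∀ i j k, 0 ≤ A i j k) ∧
  (∀ i, ∑ j, ∑ k, A i j k = 1) ∧
  (∀ j, ∑ i, ∑ k, A i j k = 1) ∧
  (∀ k, ∑ i, ∑ j, A i j k = 1)

def PlanePermutationTensor (A : Fin 2 → Fin 2 → Fin 2 → ℝ) : Prop :=
  PlaneStochastic A ∧ ∀ i j k, A i j k = 0 ∨ A i j k = 1

noncomputable def C : Fin 2 → Fin 2 → Fin 2 → ℝ := fun i j k =>
  if Even (i.val + j.val + k.val) then 0 else 1 / 2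

/-- `C` is plane-stochastic but is not a convex combination of `2 × 2 × 2`
plane-permutation tensors. -/
theorem C_planeStochastic_not_in_convexHull :
    PlaneStochastic C ∧
    C ∉ convexHull ℝ {A : Fin 2 → Fin 2 → Fin 2 → ℝ | PlanePermutationTensor A} := by
  constructor
  · refine ⟨fun i j k => ?_, ?_, ?_, ?_⟩
    · unfold C; split <;> norm_num
    · intro i; fin_cases i <;> simp [Fin.sum_univ_two, C, Nat.even_iff] <;> norm_num
    · intro j; fin_cases j <;> simp [Fin.sum_univ_two, C, Nat.even_iff] <;> norm_num
    · intro k; fin_cases k <;> simp [Fin.sum_univ_two, C, Nat.even_iff] <;> norm_num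
  · set H : Set (Fin 2 → Fin 2 → Fin 2 → ℝ) :=
      {A | A 0 0 0 + A 0 1 1 + A 1 0 1 + A 1 1 0 = 1} with hHdef
    have hconv : Convex ℝ H := by
      intro x hx y hy a b ha hb hab
      simp only [hHdef, Set.mem_setOf_eq, Pi.add_apply, Pi.smul_apply, smul_eq_mul] at *
      linear_combination a * hx + b * hy + hab
    have hsub : {A : Fin 2 → Fin 2 → Fin 2 → ℝ | PlanePermutationTensor A} ⊆ H := by
      rintro A ⟨⟨hnn, hi, hj, hk⟩, h01⟩
      have e1 := hi 0; have e2 := hi 1; have e3 := hj 0; have e4 := hj 1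
      have e5 := hk 0; have e6 := hk 1
      simp only [Fin.sum_univ_two] at e1 e2 e3 e4 e5 e6
      have n1 := hnn 0 0 0; have n2 := hnn 0 0 1; have n3 := hnn 0 1 0
      have n4 := hnn 0 1 1; have n5 := hnn 1 0 0; have n6 := hnn 1 0 1
      have n7 := hnn 1 1 0; have n8 := hnn 1 1 1
      simp only [hHdef, Set.mem_setOf_eq]
      rcases h01 0 1 1 with h|h <;> rcases h01 1 0 0 with h'|h' <;> linarith
    intro hC
    have : C ∈ H := convexHull_min hsub hconv hC
    simp only [hHdef, Set.mem_setOf_eq, C] at this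
    norm_num at this
end

section
/- Let Ω be the set of plane-stochastic 2×2×2 tensors, regarded as a subset of the real vector space of functions Fin 2 → Fin 2 → Fin 2 → ℝ. Then the set of extreme points of Ω has exactly 6 elements, and exactly 4 of these extreme points have all their entries in {0, 1}. -/
namespace PS222

noncomputable def mk (a b c e : ℝ) : Fin 2 → Fin 2 → Fin 2 → ℝ :=
  ![![![a, b], ![c, 1-a-b-c]], ![![e, 1-a-b-e], ![1-a-c-e, 2*a+b+c+e-1]]]

lemma mk_inj {a b c e a' b' c' e' : ℝ} (h : mk a b c e = mk a' b' c' e') :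
    a = a' ∧ b = b' ∧ c = c' ∧ e = e' := by
  refine ⟨congrFun (congrFun (congrFun h 0) 0) 0,
    congrFun (congrFun (congrFun h 0) 0) 1,
    congrFun (congrFun (congrFun h 0) 1) 0,
    congrFun (congrFun (congrFun h 1) 0) 0⟩

lemma eq_mk {A : Fin 2 → Fin 2 → Fin 2 → ℝ} (h : PlaneStochastic A) :
    A = mk (A 0 0 0) (A 0 0 1) (A 0 1 0) (A 1 0 0) := by
  obtain ⟨hpos, hi, hj, hk⟩ := h
  have hi0 := hi 0; have hi1 := hi 1
  have hj0 := hj 0; have hj1 := hj 1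
  have hk0 := hk 0; have hk1 := hk 1
  simp only [Fin.sum_univ_two] at hi0 hi1 hj0 hj1 hk0 hk1
  funext i j k
  fin_cases i <;> fin_cases j <;> fin_cases k <;> simp [mk] <;> linarith

lemma ps_mk {a b c e : ℝ} (h1 : 0 ≤ a) (h2 : 0 ≤ b) (h3 : 0 ≤ c) (h4 : 0 ≤ e)
    (h5 : a+b+c ≤ 1) (h6 : a+b+e ≤ 1) (h7 : a+c+e ≤ 1) (h8 : 1 ≤ 2*a+b+c+e) :
    PlaneStochastic (mk a b c e) := by
  refine ⟨?_, ?_, ?_, ?_⟩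
  · intro i j k; fin_cases i <;> fin_cases j <;> fin_cases k <;> simp [mk] <;> linarith
  · intro i; fin_cases i <;> simp [mk, Fin.sum_univ_two] <;> ring
  · intro j; fin_cases j <;> simp [mk, Fin.sum_univ_two] <;> ring
  · intro k; fin_cases k <;> simp [mk, Fin.sum_univ_two] <;> ring

lemma ineqs {A : Fin 2 → Fin 2 → Fin 2 → ℝ} (h : PlaneStochastic A) :
    0 ≤ A 0 0 0 ∧ 0 ≤ A 0 0 1 ∧ 0 ≤ A 0 1 0 ∧ 0 ≤ A 1 0 0 ∧
    A 0 0 0 + A 0 0 1 + A 0 1 0 ≤ 1 ∧ A 0 0 0 + A 0 0 1 + A 1 0 0 ≤ 1 ∧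
    A 0 0 0 + A 0 1 0 + A 1 0 0 ≤ 1 ∧
    1 ≤ 2 * A 0 0 0 + A 0 0 1 + A 0 1 0 + A 1 0 0 := by
  have hmk := eq_mk h
  obtain ⟨hpos, -, -, -⟩ := h
  have z011 := hpos 0 1 1
  have z101 := hpos 1 0 1
  have z110 := hpos 1 1 0
  have z111 := hpos 1 1 1
  rw [hmk] at z011 z101 z110 z111
  simp [mk] at z011 z101 z110 z111
  exact ⟨hpos 0 0 0, hpos 0 0 1, hpos 0 1 0, hpos 1 0 0,
    by linarith, by linarith, by linarith, by linarith⟩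

lemma convex_omega : Convex ℝ {A : Fin 2 → Fin 2 → Fin 2 → ℝ | PlaneStochastic A} := by
  rintro x hx y hy u v hu hv huv
  obtain ⟨hx0, hxi, hxj, hxk⟩ := hx
  obtain ⟨hy0, hyi, hyj, hyk⟩ := hy
  refine ⟨?_, ?_, ?_, ?_⟩
  · intro i j k
    have := hx0 i j k; have := hy0 i j k
    simp only [Pi.add_apply, Pi.smul_apply, smul_eq_mul]
    nlinarith
  · intro i
    have h1 := hxi i; have h2 := hyi i
    simp only [Fin.sum_univ_two, Pi.add_apply, Pi.smul_apply, smul_eq_mul] at h1 h2 ⊢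
    nlinarith
  · intro j
    have h1 := hxj j; have h2 := hyj j
    simp only [Fin.sum_univ_two, Pi.add_apply, Pi.smul_apply, smul_eq_mul] at h1 h2 ⊢
    nlinarith
  · intro k
    have h1 := hxk k; have h2 := hyk k
    simp only [Fin.sum_univ_two, Pi.add_apply, Pi.smul_apply, smul_eq_mul] at h1 h2 ⊢
    nlinarith

@[simp] lemma cons_val_five {α : Type*} (a b c d e f : α) : ![a,b,c,d,e,f] 5 = f := rfl

noncomputable def V : Set (Fin 2 → Fin 2 → Fin 2 → ℝ) :=
  {mk 1 0 0 0, mk 0 1 0 0, mk 0 0 1 0, mk 0 0 0 1,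
   mk (1/2) 0 0 0, mk 0 (1/2) (1/2) (1/2)}

lemma combo_mem {s : Set (Fin 2 → Fin 2 → Fin 2 → ℝ)} (hs : Convex ℝ s)
    {x1 x2 x3 x4 x5 x6 : Fin 2 → Fin 2 → Fin 2 → ℝ} (m1 : x1 ∈ s) (m2 : x2 ∈ s) (m3 : x3 ∈ s) (m4 : x4 ∈ s)
    (m5 : x5 ∈ s) (m6 : x6 ∈ s) {w1 w2 w3 w4 w5 w6 : ℝ}
    (n1 : 0 ≤ w1) (n2 : 0 ≤ w2) (n3 : 0 ≤ w3) (n4 : 0 ≤ w4) (n5 : 0 ≤ w5) (n6 : 0 ≤ w6)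
    (hsum : w1 + w2 + w3 + w4 + w5 + w6 = 1) :
    w1 • x1 + w2 • x2 + w3 • x3 + w4 • x4 + w5 • x5 + w6 • x6 ∈ s := by
  have key := hs.sum_mem (t := (Finset.univ : Finset (Fin 6)))
    (w := ![w1, w2, w3, w4, w5, w6]) (z := ![x1, x2, x3, x4, x5, x6])
    (by intro i _; fin_cases i <;> simpa)
    (by simpa [Fin.sum_univ_six] using hsum)
    (by intro i _; fin_cases i <;> simpa)
  simpa [Fin.sum_univ_six] using key

lemma mem_V_hull (x : Fin 2 → Fin 2 → Fin 2 → ℝ) (hx : x ∈ V) : x ∈ convexHull ℝ V :=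
  subset_convexHull ℝ V hx

lemma omega_subset_hull :
    {A : Fin 2 → Fin 2 → Fin 2 → ℝ | PlaneStochastic A} ⊆ convexHull ℝ V := by
  intro A hA
  set a := A 0 0 0 with ha
  set b := A 0 0 1 with hb
  set c := A 0 1 0 with hc
  set e := A 1 0 0 with he
  obtain ⟨h1, h2, h3, h4, h5, h6, h7, h8⟩ := PS222.ineqs hA
  have hmk : A = mk a b c e := eq_mk hA
  have m1 : mk 1 0 0 0 ∈ convexHull ℝ V := mem_V_hull _ (by simp [V])
  have m2 : mk 0 1 0 0 ∈ convexHull ℝ V := mem_V_hull _ (by simp [V])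
  have m3 : mk 0 0 1 0 ∈ convexHull ℝ V := mem_V_hull _ (by simp [V])
  have m4 : mk 0 0 0 1 ∈ convexHull ℝ V := mem_V_hull _ (by simp [V])
  have m5 : mk (1/2) 0 0 0 ∈ convexHull ℝ V := mem_V_hull _ (by simp [V])
  have m6 : mk 0 (1/2) (1/2) (1/2) ∈ convexHull ℝ V := mem_V_hull _ (by simp [V])
  rcases le_or_gt (a + b + c + e) 1 with hσ | hσ
  · have key := combo_mem (convex_convexHull ℝ V) m1 m2 m3 m4 m5 m6
      (w1 := 2*a+b+c+e-1) (w2 := b) (w3 := c) (w4 := e)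
      (w5 := 2*(1-(a+b+c+e))) (w6 := 0)
      (by linarith) (by linarith) (by linarith) (by linarith) (by linarith) le_rfl
      (by ring)
    have hAeq : A = (2*a+b+c+e-1) • mk 1 0 0 0 + b • mk 0 1 0 0 + c • mk 0 0 1 0 +
        e • mk 0 0 0 1 + (2*(1-(a+b+c+e))) • mk (1/2) 0 0 0 +
        (0:ℝ) • mk 0 (1/2) (1/2) (1/2) := by
      rw [hmk]
      funext i j k
      simp only [Pi.add_apply, Pi.smul_apply, smul_eq_mul]
      fin_cases i <;> fin_cases j <;> fin_cases k <;>
        simp only [mk, Fin.mk_zero, Fin.mk_one, Matrix.cons_val_zero, Matrix.cons_val_one,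
          Matrix.head_cons] <;> ring
    rw [hAeq]; exact key
  · have key := combo_mem (convex_convexHull ℝ V) m1 m2 m3 m4 m5 m6
      (w1 := a) (w2 := 1-a-c-e) (w3 := 1-a-b-e) (w4 := 1-a-b-c)
      (w5 := 0) (w6 := 2*(a+b+c+e-1))
      (by linarith) (by linarith) (by linarith) (by linarith) le_rfl (by linarith)
      (by ring)
    have hAeq : A = a • mk 1 0 0 0 + (1-a-c-e) • mk 0 1 0 0 + (1-a-b-e) • mk 0 0 1 0 +
        (1-a-b-c) • mk 0 0 0 1 + (0:ℝ) • mk (1/2) 0 0 0 +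
        (2*(a+b+c+e-1)) • mk 0 (1/2) (1/2) (1/2) := by
      rw [hmk]
      funext i j k
      simp only [Pi.add_apply, Pi.smul_apply, smul_eq_mul]
      fin_cases i <;> fin_cases j <;> fin_cases k <;>
        simp only [mk, Fin.mk_zero, Fin.mk_one, Matrix.cons_val_zero, Matrix.cons_val_one,
          Matrix.head_cons] <;> ring
    rw [hAeq]; exact key

lemma omega_eq_hull :
    {A : Fin 2 → Fin 2 → Fin 2 → ℝ | PlaneStochastic A} = convexHull ℝ V := by
  refine Set.Subset.antisymm omega_subset_hull (convexHull_min ?_ convex_omega)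
  rintro x hx
  simp only [V, Set.mem_insert_iff, Set.mem_singleton_iff] at hx
  rcases hx with rfl | rfl | rfl | rfl | rfl | rfl <;>
    exact ps_mk (by norm_num) (by norm_num) (by norm_num) (by norm_num)
      (by norm_num) (by norm_num) (by norm_num) (by norm_num)

lemma extreme_helper {T : Fin 2 → Fin 2 → Fin 2 → ℝ} (hT : PlaneStochastic T)
    (huniq : ∀ x, PlaneStochastic x → (∀ i j k, T i j k = 0 → x i j k = 0) → x = T) :
    T ∈ ({A : Fin 2 → Fin 2 → Fin 2 → ℝ | PlaneStochastic A}.extremePoints ℝ) := by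
  refine ⟨hT, ?_⟩
  rintro x hx y hy ⟨u, v, hu, hv, huv, hsum⟩
  have hvan : ∀ z : Fin 2 → Fin 2 → Fin 2 → ℝ, PlaneStochastic z →
      (u • x + v • y = T) → True := fun _ _ _ => trivial
  have hx0 : ∀ i j k, T i j k = 0 → x i j k = 0 := by
    intro i j k h0
    have hh := congrFun (congrFun (congrFun hsum i) j) k
    simp only [Pi.add_apply, Pi.smul_apply, smul_eq_mul] at hh
    rw [h0] at hh
    have := hx.1 i j k; have := hy.1 i j k
    nlinarith
  have hy0 : ∀ i j k, T i j k = 0 → y i j k = 0 := by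
    intro i j k h0
    have hh := congrFun (congrFun (congrFun hsum i) j) k
    simp only [Pi.add_apply, Pi.smul_apply, smul_eq_mul] at hh
    rw [h0] at hh
    have := hx.1 i j k; have := hy.1 i j k
    nlinarith
  exact huniq x hx hx0

lemma uniq1 : ∀ x, PlaneStochastic x →
    (∀ i j k, mk 1 0 0 0 i j k = 0 → x i j k = 0) → x = mk 1 0 0 0 := by
  intro x hx hz
  have he := eq_mk hx
  have z1 : x 0 0 1 = 0 := hz 0 0 1 (by norm_num [mk])
  have z2 : x 0 1 0 = 0 := hz 0 1 0 (by norm_num [mk])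
  have z3 : x 1 0 0 = 0 := hz 1 0 0 (by norm_num [mk])
  have z4 : x 0 1 1 = 0 := hz 0 1 1 (by norm_num [mk])
  have h011 : x 0 1 1 = 1 - x 0 0 0 - x 0 0 1 - x 0 1 0 := by
    conv_lhs => rw [he]
    norm_num [mk]
  have h000 : x 0 0 0 = 1 := by linarith
  rw [he, z1, z2, z3, h000]

lemma uniq2 : ∀ x, PlaneStochastic x →
    (∀ i j k, mk 0 1 0 0 i j k = 0 → x i j k = 0) → x = mk 0 1 0 0 := by
  intro x hx hz
  have he := eq_mk hx
  have z1 : x 0 0 0 = 0 := hz 0 0 0 (by norm_num [mk])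
  have z2 : x 0 1 0 = 0 := hz 0 1 0 (by norm_num [mk])
  have z3 : x 1 0 0 = 0 := hz 1 0 0 (by norm_num [mk])
  have z4 : x 0 1 1 = 0 := hz 0 1 1 (by norm_num [mk])
  have h011 : x 0 1 1 = 1 - x 0 0 0 - x 0 0 1 - x 0 1 0 := by
    conv_lhs => rw [he]
    norm_num [mk]
  have h001 : x 0 0 1 = 1 := by linarith
  rw [he, z1, z2, z3, h001]

lemma uniq3 : ∀ x, PlaneStochastic x →
    (∀ i j k, mk 0 0 1 0 i j k = 0 → x i j k = 0) → x = mk 0 0 1 0 := by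
  intro x hx hz
  have he := eq_mk hx
  have z1 : x 0 0 0 = 0 := hz 0 0 0 (by norm_num [mk])
  have z2 : x 0 0 1 = 0 := hz 0 0 1 (by norm_num [mk])
  have z3 : x 1 0 0 = 0 := hz 1 0 0 (by norm_num [mk])
  have z4 : x 0 1 1 = 0 := hz 0 1 1 (by norm_num [mk])
  have h011 : x 0 1 1 = 1 - x 0 0 0 - x 0 0 1 - x 0 1 0 := by
    conv_lhs => rw [he]
    norm_num [mk]
  have h010 : x 0 1 0 = 1 := by linarith
  rw [he, z1, z2, z3, h010]

lemma uniq4 : ∀ x, PlaneStochastic x →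
    (∀ i j k, mk 0 0 0 1 i j k = 0 → x i j k = 0) → x = mk 0 0 0 1 := by
  intro x hx hz
  have he := eq_mk hx
  have z1 : x 0 0 0 = 0 := hz 0 0 0 (by norm_num [mk])
  have z2 : x 0 0 1 = 0 := hz 0 0 1 (by norm_num [mk])
  have z3 : x 0 1 0 = 0 := hz 0 1 0 (by norm_num [mk])
  have z4 : x 1 0 1 = 0 := hz 1 0 1 (by norm_num [mk])
  have h101 : x 1 0 1 = 1 - x 0 0 0 - x 0 0 1 - x 1 0 0 := by
    conv_lhs => rw [he]
    norm_num [mk]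
  have h100 : x 1 0 0 = 1 := by linarith
  rw [he, z1, z2, z3, h100]

lemma uniq5 : ∀ x, PlaneStochastic x →
    (∀ i j k, mk (1/2) 0 0 0 i j k = 0 → x i j k = 0) → x = mk (1/2) 0 0 0 := by
  intro x hx hz
  have he := eq_mk hx
  have z1 : x 0 0 1 = 0 := hz 0 0 1 (by norm_num [mk])
  have z2 : x 0 1 0 = 0 := hz 0 1 0 (by norm_num [mk])
  have z3 : x 1 0 0 = 0 := hz 1 0 0 (by norm_num [mk])
  have z4 : x 1 1 1 = 0 := hz 1 1 1 (by norm_num [mk])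
  have h111 : x 1 1 1 = 2 * x 0 0 0 + x 0 0 1 + x 0 1 0 + x 1 0 0 - 1 := by
    conv_lhs => rw [he]
    norm_num [mk]
  have h000 : x 0 0 0 = 1/2 := by linarith
  rw [he, z1, z2, z3, h000]

lemma uniq6 : ∀ x, PlaneStochastic x →
    (∀ i j k, mk 0 (1/2) (1/2) (1/2) i j k = 0 → x i j k = 0) →
    x = mk 0 (1/2) (1/2) (1/2) := by
  intro x hx hz
  have he := eq_mk hx
  have z1 : x 0 0 0 = 0 := hz 0 0 0 (by norm_num [mk])
  have z2 : x 0 1 1 = 0 := hz 0 1 1 (by norm_num [mk])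
  have z3 : x 1 0 1 = 0 := hz 1 0 1 (by norm_num [mk])
  have z4 : x 1 1 0 = 0 := hz 1 1 0 (by norm_num [mk])
  have h011 : x 0 1 1 = 1 - x 0 0 0 - x 0 0 1 - x 0 1 0 := by
    conv_lhs => rw [he]
    norm_num [mk]
  have h101 : x 1 0 1 = 1 - x 0 0 0 - x 0 0 1 - x 1 0 0 := by
    conv_lhs => rw [he]
    norm_num [mk]
  have h110 : x 1 1 0 = 1 - x 0 0 0 - x 0 1 0 - x 1 0 0 := by
    conv_lhs => rw [he]
    norm_num [mk]
  have hb : x 0 0 1 = 1/2 := by linarith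
  have hc : x 0 1 0 = 1/2 := by linarith
  have hee : x 1 0 0 = 1/2 := by linarith
  rw [he, z1, hb, hc, hee]

lemma ps_T1 : PlaneStochastic (mk 1 0 0 0) :=
  ps_mk (by norm_num) (by norm_num) (by norm_num) (by norm_num)
    (by norm_num) (by norm_num) (by norm_num) (by norm_num)
lemma ps_T2 : PlaneStochastic (mk 0 1 0 0) :=
  ps_mk (by norm_num) (by norm_num) (by norm_num) (by norm_num)
    (by norm_num) (by norm_num) (by norm_num) (by norm_num)
lemma ps_T3 : PlaneStochastic (mk 0 0 1 0) :=
  ps_mk (by norm_num) (by norm_num) (by norm_num) (by norm_num)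
    (by norm_num) (by norm_num) (by norm_num) (by norm_num)
lemma ps_T4 : PlaneStochastic (mk 0 0 0 1) :=
  ps_mk (by norm_num) (by norm_num) (by norm_num) (by norm_num)
    (by norm_num) (by norm_num) (by norm_num) (by norm_num)
lemma ps_T5 : PlaneStochastic (mk (1/2) 0 0 0) :=
  ps_mk (by norm_num) (by norm_num) (by norm_num) (by norm_num)
    (by norm_num) (by norm_num) (by norm_num) (by norm_num)
lemma ps_T6 : PlaneStochastic (mk 0 (1/2) (1/2) (1/2)) :=
  ps_mk (by norm_num) (by norm_num) (by norm_num) (by norm_num)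
    (by norm_num) (by norm_num) (by norm_num) (by norm_num)

lemma extremePoints_eq :
    ({A : Fin 2 → Fin 2 → Fin 2 → ℝ | PlaneStochastic A}.extremePoints ℝ) = V := by
  apply Set.Subset.antisymm
  · rw [omega_eq_hull]
    exact extremePoints_convexHull_subset
  · intro x hx
    simp only [V, Set.mem_insert_iff, Set.mem_singleton_iff] at hx
    rcases hx with rfl | rfl | rfl | rfl | rfl | rfl
    · exact extreme_helper ps_T1 uniq1
    · exact extreme_helper ps_T2 uniq2
    · exact extreme_helper ps_T3 uniq3
    · exact extreme_helper ps_T4 uniq4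
    · exact extreme_helper ps_T5 uniq5
    · exact extreme_helper ps_T6 uniq6

end PS222

/-- The polytope of plane-stochastic `2 × 2 × 2` tensors has exactly 6 extreme
points, exactly 4 of which are (0,1)-tensors. -/
theorem extremePoints_planeStochastic_two :
    ({A : Fin 2 → Fin 2 → Fin 2 → ℝ | PlaneStochastic A}.extremePoints ℝ).ncard = 6 ∧
    {A ∈ {A : Fin 2 → Fin 2 → Fin 2 → ℝ | PlaneStochastic A}.extremePoints ℝ |
        ∀ i j k, A i j k = 0 ∨ A i j k = 1}.ncard = 4 := by
  have hset := PS222.extremePoints_eq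
  have n1 : PS222.mk 1 0 0 0 ∉ ({PS222.mk 0 1 0 0, PS222.mk 0 0 1 0, PS222.mk 0 0 0 1,
      PS222.mk (1/2) 0 0 0, PS222.mk 0 (1/2) (1/2) (1/2)} :
      Set (Fin 2 → Fin 2 → Fin 2 → ℝ)) := by
    simp only [Set.mem_insert_iff, Set.mem_singleton_iff]
    push_neg
    refine ⟨?_, ?_, ?_, ?_, ?_⟩ <;> intro h <;>
      obtain ⟨h1, h2, h3, h4⟩ := PS222.mk_inj h <;> linarith
  have n2 : PS222.mk 0 1 0 0 ∉ ({PS222.mk 0 0 1 0, PS222.mk 0 0 0 1,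
      PS222.mk (1/2) 0 0 0, PS222.mk 0 (1/2) (1/2) (1/2)} :
      Set (Fin 2 → Fin 2 → Fin 2 → ℝ)) := by
    simp only [Set.mem_insert_iff, Set.mem_singleton_iff]
    push_neg
    refine ⟨?_, ?_, ?_, ?_⟩ <;> intro h <;>
      obtain ⟨h1, h2, h3, h4⟩ := PS222.mk_inj h <;> linarith
  have n3 : PS222.mk 0 0 1 0 ∉ ({PS222.mk 0 0 0 1,
      PS222.mk (1/2) 0 0 0, PS222.mk 0 (1/2) (1/2) (1/2)} :
      Set (Fin 2 → Fin 2 → Fin 2 → ℝ)) := by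
    simp only [Set.mem_insert_iff, Set.mem_singleton_iff]
    push_neg
    refine ⟨?_, ?_, ?_⟩ <;> intro h <;>
      obtain ⟨h1, h2, h3, h4⟩ := PS222.mk_inj h <;> linarith
  have n4 : PS222.mk 0 0 0 1 ∉ ({PS222.mk (1/2) 0 0 0, PS222.mk 0 (1/2) (1/2) (1/2)} :
      Set (Fin 2 → Fin 2 → Fin 2 → ℝ)) := by
    simp only [Set.mem_insert_iff, Set.mem_singleton_iff]
    push_neg
    refine ⟨?_, ?_⟩ <;> intro h <;>
      obtain ⟨h1, h2, h3, h4⟩ := PS222.mk_inj h <;> linarith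
  have n5 : PS222.mk (1/2) 0 0 0 ≠ PS222.mk 0 (1/2) (1/2) (1/2) := by
    intro h
    obtain ⟨h1, h2, h3, h4⟩ := PS222.mk_inj h
    linarith
  constructor
  · rw [hset]
    simp only [PS222.V]
    rw [Set.ncard_insert_of_notMem n1 (Set.toFinite _),
      Set.ncard_insert_of_notMem n2 (Set.toFinite _),
      Set.ncard_insert_of_notMem n3 (Set.toFinite _),
      Set.ncard_insert_of_notMem n4 (Set.toFinite _),
      Set.ncard_pair n5]
  · have hs2 : {A ∈ {A : Fin 2 → Fin 2 → Fin 2 → ℝ | PlaneStochastic A}.extremePoints ℝ |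
        ∀ i j k, A i j k = 0 ∨ A i j k = 1} = ({PS222.mk 1 0 0 0, PS222.mk 0 1 0 0,
          PS222.mk 0 0 1 0, PS222.mk 0 0 0 1} : Set (Fin 2 → Fin 2 → Fin 2 → ℝ)) := by
      rw [hset]
      ext A
      simp only [PS222.V, Set.mem_setOf_eq, Set.mem_insert_iff, Set.mem_singleton_iff]
      constructor
      · rintro ⟨(rfl | rfl | rfl | rfl | rfl | rfl), hP⟩
        · tauto
        · tauto
        · tauto
        · tauto
        · exfalso; have := hP 0 0 0; norm_num [PS222.mk] at this
        · exfalso; have := hP 0 0 1; norm_num [PS222.mk] at this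
      · rintro (rfl | rfl | rfl | rfl) <;> refine ⟨by tauto, ?_⟩ <;>
          intro i j k <;> fin_cases i <;> fin_cases j <;> fin_cases k <;>
          norm_num [PS222.mk, Fin.mk_zero, Fin.mk_one]
    rw [hs2]
    have m2 : PS222.mk 0 1 0 0 ∉ ({PS222.mk 0 0 1 0, PS222.mk 0 0 0 1} :
        Set (Fin 2 → Fin 2 → Fin 2 → ℝ)) := by
      simp only [Set.mem_insert_iff, Set.mem_singleton_iff]
      push_neg
      refine ⟨?_, ?_⟩ <;> intro h <;>
        obtain ⟨h1, h2, h3, h4⟩ := PS222.mk_inj h <;> linarith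
    have m3 : PS222.mk 0 0 1 0 ≠ PS222.mk 0 0 0 1 := by
      intro h
      obtain ⟨h1, h2, h3, h4⟩ := PS222.mk_inj h
      linarith
    have m1 : PS222.mk 1 0 0 0 ∉ ({PS222.mk 0 1 0 0, PS222.mk 0 0 1 0, PS222.mk 0 0 0 1} :
        Set (Fin 2 → Fin 2 → Fin 2 → ℝ)) := by
      simp only [Set.mem_insert_iff, Set.mem_singleton_iff]
      push_neg
      refine ⟨?_, ?_, ?_⟩ <;> intro h <;>
        obtain ⟨h1, h2, h3, h4⟩ := PS222.mk_inj h <;> linarith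
    rw [Set.ncard_insert_of_notMem m1 (Set.toFinite _),
      Set.ncard_insert_of_notMem m2 (Set.toFinite _),
      Set.ncard_pair m3]
end
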